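/- Let f ∈ L^1(−π,π) be 2π-periodic with Fourier coefficients f̂(n), and suppose f̂(n) ∈ K(θ₀) := {z ∈ ℂ : |arg z| ≤ θ₀} for some θ₀ ∈ [0, π/2) and all n ≥ 0. Then there is a constant C(θ₀) such that ∑_{k=1}^{n} |f̂(n+k)|/k ≤ C(θ₀) ‖f − S_n(f)‖_{L^1} for all n ≥ 1, where S_n(f) is the n-th partial Fourier sum. -/

import Mathlib

open scoped Real
open MeasureTheory Finset Filter

/-- Complex Fourier coefficient of a `2π`-periodic function. -/
noncomputable def fCoef (f : ℝ → ℂ) (k : ℤ) : ℂ :=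
  (1 / (2 * π)) * ∫ x in (-π)..π, f x * Complex.exp (-Complex.I * (k : ℂ) * (x : ℂ))

/-- `n`-th symmetric partial sum of the Fourier series. -/
noncomputable def pSum (f : ℝ → ℂ) (n : ℕ) (x : ℝ) : ℂ :=
  ∑ k ∈ Finset.Icc (-(n : ℤ)) (n : ℤ), fCoef f k * Complex.exp (Complex.I * (k : ℂ) * (x : ℂ))

/-- `L¹` norm over one period. -/
noncomputable def L1 (g : ℝ → ℂ) : ℝ := ∫ x in (-π)..π, ‖g x‖

/-- Mean Value Bounded Variation Sequence (complex sense). -/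
def MVBVS (c : ℕ → ℂ) : Prop :=
  (∃ θ : ℝ, 0 ≤ θ ∧ θ < π / 2 ∧ ∀ n, |(c n).arg| ≤ θ) ∧
  ∃ lam : ℝ, 2 ≤ lam ∧ ∃ C : ℝ, 0 < C ∧ ∀ m : ℕ, 1 ≤ m →
    ∑ k ∈ Finset.Icc m (2 * m), ‖c (k + 1) - c k‖ ≤
      C / m * ∑ k ∈ Finset.Icc ⌊(m : ℝ) / lam⌋₊ ⌊lam * m⌋₊, ‖c k‖

section StmtAux

lemma exp_I_int_pi (m : ℤ) : Complex.exp (Complex.I * (m:ℂ) * (π:ℂ)) = (-1) ^ m := by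
  have : Complex.I * (m:ℂ) * (π:ℂ) = (m : ℂ) * (π * Complex.I) := by ring
  rw [this, Complex.exp_int_mul, Complex.exp_pi_mul_I]

lemma orth (m : ℤ) : (∫ x in (-π)..π, Complex.exp (Complex.I * (m:ℂ) * (x:ℂ)))
    = if m = 0 then (2 * π : ℂ) else 0 := by
  rcases eq_or_ne m 0 with rfl | hm
  · simp; ring
  · have hc : (Complex.I * (m:ℂ)) ≠ 0 := by simp [Complex.ext_iff, hm]
    rw [if_neg hm]
    calc (∫ x in (-π)..π, Complex.exp (Complex.I * (m:ℂ) * (x:ℂ)))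
        = (Complex.exp (Complex.I * (m:ℂ) * (π:ℂ)) - Complex.exp (Complex.I * (m:ℂ) * ((-π:ℝ):ℂ))) / (Complex.I * (m:ℂ)) := by
          rw [integral_exp_mul_complex hc]
      _ = 0 := by
          rw [Complex.ofReal_neg]
          have : Complex.I * (m:ℂ) * (-(π:ℂ)) = Complex.I * ((-m:ℤ):ℂ) * (π:ℂ) := by push_cast; ring
          rw [this, exp_I_int_pi, exp_I_int_pi, zpow_neg]
          have h2 : ((-1:ℂ)^m)⁻¹ = (-1:ℂ)^m := by
            rcases Int.even_or_odd m with h | h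
            · rw [h.neg_one_zpow]; norm_num
            · rw [h.neg_one_zpow]; norm_num
          rw [h2, sub_self, zero_div]


lemma abs_exp_sub_one (x : ℝ) :
    ‖Complex.exp (Complex.I * (x:ℂ)) - 1‖ = 2 * |Real.sin (x/2)| := by
  have h1 : Complex.I * (x:ℂ) = (x:ℂ) * Complex.I := by ring
  rw [h1]
  have hre : (Complex.exp ((x:ℂ) * Complex.I) - 1).re = Real.cos x - 1 := by
    simp [Complex.exp_ofReal_mul_I_re]
  have him : (Complex.exp ((x:ℂ) * Complex.I) - 1).im = Real.sin x := by
    simp [Complex.exp_ofReal_mul_I_im]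
  rw [Complex.norm_def, Complex.normSq_apply, hre, him]
  have hs : Real.sin (x/2) ^ 2 = 1/2 - Real.cos x / 2 := by
    have := Real.sin_sq_eq_half_sub (x/2)
    rw [show 2 * (x/2) = x by ring] at this; simpa using this
  have : (Real.cos x - 1) * (Real.cos x - 1) + Real.sin x * Real.sin x
      = (2 * |Real.sin (x/2)|)^2 := by
    have hc := Real.sin_sq_add_cos_sq x
    rw [mul_pow, sq_abs]
    nlinarith [hs, hc]
  rw [this, Real.sqrt_sq (by positivity)]

lemma dirichlet_bound {x : ℝ} (hx0 : 0 < x) (hxpi : x ≤ π) (k : ℕ) :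
    |∑ j ∈ Icc 1 k, Real.sin (j * x)| ≤ π / x := by
  set z : ℂ := Complex.exp (Complex.I * (x:ℂ)) with hz
  have hsin : 0 < Real.sin (x/2) :=
    Real.sin_pos_of_pos_of_lt_pi (by linarith) (by linarith [Real.pi_pos])
  have habs1 : ‖z - 1‖ = 2 * Real.sin (x/2) := by
    rw [abs_exp_sub_one, abs_of_pos hsin]
  have hzj : ∀ j : ℕ, z ^ j = Complex.exp (Complex.I * ((j:ℝ) * x : ℝ)) := by
    intro j
    rw [← Complex.exp_nat_mul]
    push_cast; ring_nf
  have him : (∑ j ∈ Icc 1 k, Real.sin (j * x)) = (∑ j ∈ Icc 1 k, z ^ j).im := by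
    rw [Complex.im_sum]
    refine Finset.sum_congr rfl fun j _ => ?_
    rw [hzj j, show Complex.I * ((j:ℝ) * x : ℝ) = ((j:ℝ)*x : ℝ) * Complex.I by ring,
      Complex.exp_ofReal_mul_I_im]
  set S : ℂ := ∑ j ∈ Icc 1 k, z ^ j with hS
  have key : S * (z - 1) = z ^ (k+1) - z := by
    have h1 : S = (∑ j ∈ range (k+1), z ^ j) - 1 := by
      rw [hS, ← Finset.Ico_add_one_right_eq_Icc, Finset.sum_Ico_eq_sum_range, Finset.sum_range_succ']
      simp [add_comm]
    rw [h1, sub_mul, geom_sum_mul]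
    ring
  have habsz : ∀ j : ℕ, ‖z ^ j‖ = 1 := by
    intro j
    rw [norm_pow, hz, show Complex.I * (x:ℂ) = (x:ℂ) * Complex.I by ring,
      Complex.norm_exp_ofReal_mul_I, one_pow]
  have hSbound : ‖S‖ ≤ 1 / Real.sin (x/2) := by
    have h2 : ‖S‖ * (2 * Real.sin (x/2)) ≤ 2 := by
      rw [← habs1, ← norm_mul, key]
      calc ‖z ^ (k+1) - z‖ ≤ ‖z^(k+1)‖ + ‖z‖ := by
            simpa using norm_sub_le (z^(k+1)) z
        _ = 2 := by rw [habsz (k+1), ← pow_one z, habsz 1]; norm_num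
    rw [le_div_iff₀ hsin]
    nlinarith
  have hfrac : 1 / Real.sin (x/2) ≤ π / x := by
    have h3 : x / π ≤ Real.sin (x/2) := by
      have := Real.mul_le_sin (x := x/2) (by linarith) (by linarith)
      calc x / π = 2/π * (x/2) := by ring
        _ ≤ Real.sin (x/2) := this
    rw [div_le_div_iff₀ hsin hx0]
    have hπ := Real.pi_pos
    calc 1 * x = (x/π) * π := by field_simp
      _ ≤ Real.sin (x/2) * π := by nlinarith
      _ = π * Real.sin (x/2) := by ring
  calc |∑ j ∈ Icc 1 k, Real.sin (j * x)| = |S.im| := by rw [him]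
    _ ≤ ‖S‖ := Complex.abs_im_le_norm S
    _ ≤ 1 / Real.sin (x/2) := hSbound
    _ ≤ π / x := hfrac

lemma tele_sum (a : ℕ) : ∀ b : ℕ, a ≤ b →
    ∑ i ∈ Ioc a b, (((i:ℝ))⁻¹ - ((i:ℝ)+1)⁻¹) = ((a:ℝ)+1)⁻¹ - ((b:ℝ)+1)⁻¹ := by
  intro b hb
  refine Nat.le_induction ?_ ?_ b hb
  · simp
  · intro n hn IH
    rw [sum_Ioc_succ_top hn, IH]
    push_cast
    ring

lemma sineSum_bound_pos {x : ℝ} (hx0 : 0 < x) (hxpi : x ≤ π) (n : ℕ) :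
    |∑ k ∈ Icc 1 n, Real.sin (k * x) / k| ≤ π + 2 := by
  have hπ := Real.pi_pos
  set N : ℕ := min n ⌊π / x⌋₊ with hN
  have hNn : N ≤ n := min_le_left _ _
  have hNf : N ≤ ⌊π / x⌋₊ := min_le_right _ _
  have hIcc : ∀ m : ℕ, Icc 1 m = Ioc 0 m := fun m => by
    rw [← Finset.Icc_add_one_left_eq_Ioc]; rfl
  have hsplit : ∑ k ∈ Icc 1 n, Real.sin (k * x) / k
      = (∑ k ∈ Ioc 0 N, Real.sin (k * x) / k) + ∑ k ∈ Ioc N n, Real.sin (k * x) / k := by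
    rw [hIcc, Finset.sum_Ioc_consecutive _ (Nat.zero_le N) hNn]
  -- part 1
  have h1 : |∑ k ∈ Ioc 0 N, Real.sin (k * x) / k| ≤ π := by
    calc |∑ k ∈ Ioc 0 N, Real.sin (k * x) / k| ≤ ∑ k ∈ Ioc 0 N, |Real.sin (k * x) / k| :=
          Finset.abs_sum_le_sum_abs _ _
      _ ≤ ∑ k ∈ Ioc 0 N, x := by
          refine Finset.sum_le_sum fun k hk => ?_
          have hk1 : 1 ≤ k := (Finset.mem_Ioc.1 hk).1
          have hkpos : (0:ℝ) < k := by exact_mod_cast hk1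
          rw [abs_div, abs_of_pos hkpos, div_le_iff₀ hkpos]
          calc |Real.sin (k * x)| ≤ |(k:ℝ) * x| := Real.abs_sin_le_abs
            _ = x * k := by rw [abs_of_pos (by positivity)]; ring
      _ = N * x := by rw [Finset.sum_const, Nat.card_Ioc]; simp [nsmul_eq_mul]
      _ ≤ ⌊π / x⌋₊ * x := by
          have : (N:ℝ) ≤ ⌊π / x⌋₊ := by exact_mod_cast hNf
          nlinarith
      _ ≤ (π / x) * x := by
          have := Nat.floor_le (a := π / x) (by positivity)
          nlinarith
      _ = π := by field_simp
  -- part 2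
  have h2 : |∑ k ∈ Ioc N n, Real.sin (k * x) / k| ≤ 2 := by
    rcases eq_or_lt_of_le hNn with heq | hlt
    · rw [heq, Finset.Ioc_self, Finset.sum_empty]; norm_num
    · -- N < n, so N = ⌊π/x⌋₊ and n ≥ ⌊π/x⌋₊ + 1
      have hNfl : N = ⌊π / x⌋₊ := by
        rcases min_cases n ⌊π / x⌋₊ with ⟨h, _⟩ | ⟨h, _⟩
        · omega
        · exact h
      have hB : (0:ℝ) < π / x := by positivity
      have hN1 : π / x < (N:ℝ) + 1 := by
        rw [hNfl]; push_cast; exact Nat.lt_floor_add_one _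
      have hN1' : (0:ℝ) < (N:ℝ) + 1 := by positivity
      set B := π / x with hBdef
      set g : ℕ → ℝ := fun i => Real.sin (i * x) with hg
      have hG : ∀ m : ℕ, |∑ i ∈ Finset.range m, g i| ≤ B := by
        intro m
        cases m with
        | zero => simp [hBdef]; positivity
        | succ m =>
          have : ∑ i ∈ Finset.range (m+1), g i = ∑ j ∈ Icc 1 m, Real.sin (j * x) := by
            rw [Finset.range_eq_Ico, Finset.sum_eq_sum_Ico_succ_bot (Nat.succ_pos m),
              Nat.succ_eq_add_one, Finset.Ico_add_one_right_eq_Icc]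
            simp [hg]
          rw [this]
          exact dirichlet_bound hx0 hxpi m
      have hn1 : 1 ≤ n := Nat.one_le_iff_ne_zero.2 (by omega)
      have habel := Finset.sum_Ioc_by_parts (fun i => ((i:ℝ))⁻¹) g hlt
      have e1 : ∑ k ∈ Ioc N n, Real.sin (k * x) / k
          = ((n:ℝ))⁻¹ • (∑ i ∈ Finset.range (n+1), g i)
            - (((N+1:ℕ):ℝ))⁻¹ • (∑ i ∈ Finset.range (N+1), g i)
            - ∑ i ∈ Ioc N (n-1), ((((i+1:ℕ):ℝ))⁻¹ - ((i:ℝ))⁻¹) • (∑ j ∈ Finset.range (i+1), g j) := by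
        rw [← habel]
        refine Finset.sum_congr rfl fun i hi => ?_
        rw [smul_eq_mul, hg, div_eq_inv_mul]
      have hterm : ∀ i ∈ Ioc N (n-1),
          |((((i+1:ℕ):ℝ))⁻¹ - ((i:ℝ))⁻¹) • (∑ j ∈ Finset.range (i+1), g j)|
            ≤ (((i:ℝ))⁻¹ - ((i:ℝ)+1)⁻¹) * B := by
        intro i hi
        have hi1 : 1 ≤ i := by
          have := (Finset.mem_Ioc.1 hi).1; omega
        have hipos : (0:ℝ) < i := by exact_mod_cast hi1
        have h1 : ((i:ℝ)+1)⁻¹ ≤ ((i:ℝ))⁻¹ := by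
          apply inv_anti₀ hipos; linarith
        rw [smul_eq_mul, abs_mul]
        have : |(((i+1:ℕ):ℝ))⁻¹ - ((i:ℝ))⁻¹| = ((i:ℝ))⁻¹ - ((i:ℝ)+1)⁻¹ := by
          push_cast
          rw [abs_sub_comm, abs_of_nonneg (by linarith)]
        rw [this]
        exact mul_le_mul_of_nonneg_left (hG (i+1)) (by linarith)
      have htel : ∑ i ∈ Ioc N (n-1), ((((i:ℝ))⁻¹ - ((i:ℝ)+1)⁻¹) * B)
          = (((N:ℝ)+1)⁻¹ - (((n-1:ℕ):ℝ)+1)⁻¹) * B := by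
        rw [← Finset.sum_mul, tele_sum N (n-1) (by omega)]
      have hcast : (((n-1:ℕ):ℝ)+1) = (n:ℝ) := by
        have : ((n-1:ℕ):ℝ) = (n:ℝ) - 1 := by
          push_cast [Nat.cast_sub hn1]; ring
        rw [this]; ring
      have hnpos : (0:ℝ) < n := by exact_mod_cast hn1
      have hbound2 : |∑ k ∈ Ioc N n, Real.sin (k * x) / k|
          ≤ ((n:ℝ))⁻¹ * B + (((N:ℝ)+1))⁻¹ * B + (((N:ℝ)+1)⁻¹ - ((n:ℝ))⁻¹) * B := by
        rw [e1]
        have hA : |((n:ℝ))⁻¹ • (∑ i ∈ Finset.range (n+1), g i)| ≤ ((n:ℝ))⁻¹ * B := by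
          rw [smul_eq_mul, abs_mul, abs_of_nonneg (by positivity)]
          exact mul_le_mul_of_nonneg_left (hG (n+1)) (by positivity)
        have hB2 : |(((N+1:ℕ):ℝ))⁻¹ • (∑ i ∈ Finset.range (N+1), g i)| ≤ (((N:ℝ)+1))⁻¹ * B := by
          rw [smul_eq_mul, abs_mul, abs_of_nonneg (by positivity)]
          push_cast
          exact mul_le_mul_of_nonneg_left (hG (N+1)) (by positivity)
        have hC : |∑ i ∈ Ioc N (n-1), ((((i+1:ℕ):ℝ))⁻¹ - ((i:ℝ))⁻¹) • (∑ j ∈ Finset.range (i+1), g j)|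
            ≤ (((N:ℝ)+1)⁻¹ - ((n:ℝ))⁻¹) * B := by
          calc |∑ i ∈ Ioc N (n-1), ((((i+1:ℕ):ℝ))⁻¹ - ((i:ℝ))⁻¹) • (∑ j ∈ Finset.range (i+1), g j)|
              ≤ ∑ i ∈ Ioc N (n-1), |((((i+1:ℕ):ℝ))⁻¹ - ((i:ℝ))⁻¹) • (∑ j ∈ Finset.range (i+1), g j)| :=
                Finset.abs_sum_le_sum_abs _ _
            _ ≤ ∑ i ∈ Ioc N (n-1), ((((i:ℝ))⁻¹ - ((i:ℝ)+1)⁻¹) * B) := Finset.sum_le_sum hterm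
            _ = (((N:ℝ)+1)⁻¹ - ((n:ℝ))⁻¹) * B := by rw [htel, hcast]
        calc |((n:ℝ))⁻¹ • (∑ i ∈ Finset.range (n+1), g i)
              - (((N+1:ℕ):ℝ))⁻¹ • (∑ i ∈ Finset.range (N+1), g i)
              - ∑ i ∈ Ioc N (n-1), ((((i+1:ℕ):ℝ))⁻¹ - ((i:ℝ))⁻¹) • (∑ j ∈ Finset.range (i+1), g j)|
            ≤ |((n:ℝ))⁻¹ • (∑ i ∈ Finset.range (n+1), g i)|
              + |(((N+1:ℕ):ℝ))⁻¹ • (∑ i ∈ Finset.range (N+1), g i)|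
              + |∑ i ∈ Ioc N (n-1), ((((i+1:ℕ):ℝ))⁻¹ - ((i:ℝ))⁻¹) • (∑ j ∈ Finset.range (i+1), g j)| := by
              exact (abs_sub _ _).trans (by gcongr <;> exact abs_sub _ _)
          _ ≤ ((n:ℝ))⁻¹ * B + (((N:ℝ)+1))⁻¹ * B + (((N:ℝ)+1)⁻¹ - ((n:ℝ))⁻¹) * B :=
              add_le_add (add_le_add hA hB2) hC
      have hfin : ((n:ℝ))⁻¹ * B + (((N:ℝ)+1))⁻¹ * B + (((N:ℝ)+1)⁻¹ - ((n:ℝ))⁻¹) * B ≤ 2 := by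
        have h1 : ((n:ℝ))⁻¹ * B + (((N:ℝ)+1))⁻¹ * B + (((N:ℝ)+1)⁻¹ - ((n:ℝ))⁻¹) * B
            = 2 * ((((N:ℝ)+1))⁻¹ * B) := by ring
        rw [h1]
        have h2 : (((N:ℝ)+1))⁻¹ * B ≤ 1 := by
          rw [inv_mul_le_iff₀ hN1']
          linarith
        linarith
      exact hbound2.trans hfin
  calc |∑ k ∈ Icc 1 n, Real.sin (k * x) / k| ≤ |∑ k ∈ Ioc 0 N, Real.sin (k * x) / k| + |∑ k ∈ Ioc N n, Real.sin (k * x) / k| := by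
        rw [hsplit]; exact abs_add_le _ _
    _ ≤ π + 2 := add_le_add h1 h2

lemma sineSum_bound (n : ℕ) (x : ℝ) :
    |∑ k ∈ Icc 1 n, Real.sin (k * x) / k| ≤ π + 2 := by
  have hπ := Real.pi_pos
  have hp : (0:ℝ) < 2 * π := by linarith
  set y := toIocMod hp (-π) x with hy
  have hmem : y ∈ Set.Ioc (-π) (-π + 2 * π) := toIocMod_mem_Ioc hp (-π) x
  have hmem' : -π < y ∧ y ≤ π := by constructor; exact hmem.1; linarith [hmem.2]
  obtain ⟨m, hm⟩ : ∃ m : ℤ, x = y + m * (2 * π) := by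
    refine ⟨toIocDiv hp (-π) x, ?_⟩
    have := self_sub_toIocMod hp (-π) x
    rw [zsmul_eq_mul] at this
    linarith [this]
  have heq : ∀ k : ℕ, Real.sin (k * x) = Real.sin (k * y) := by
    intro k
    rw [hm, show (k:ℝ) * (y + m * (2*π)) = k * y + (k * m : ℤ) * (2*π) by push_cast; ring,
      Real.sin_add_int_mul_two_pi]
  have hsum : ∑ k ∈ Icc 1 n, Real.sin (k * x) / k = ∑ k ∈ Icc 1 n, Real.sin (k * y) / k := by
    exact Finset.sum_congr rfl fun k _ => by rw [heq k]
  rw [hsum]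
  rcases lt_trichotomy y 0 with hneg | h0 | hpos
  · have : ∑ k ∈ Icc 1 n, Real.sin (k * y) / k = -∑ k ∈ Icc 1 n, Real.sin (k * (-y)) / k := by
      rw [← Finset.sum_neg_distrib]
      refine Finset.sum_congr rfl fun k _ => ?_
      rw [show (k:ℝ) * (-y) = -(k * y) by ring, Real.sin_neg]
      ring
    rw [this, abs_neg]
    exact sineSum_bound_pos (by linarith) (by linarith [hmem'.1]) n
  · rw [h0]
    simp
    linarith
  · exact sineSum_bound_pos hpos hmem'.2 n

lemma two_pi_ne : ((2 * π : ℝ) : ℂ) ≠ 0 := by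
  simp [Real.pi_ne_zero]

lemma cont_exp (m : ℤ) : Continuous (fun x : ℝ => Complex.exp (-Complex.I * (m:ℂ) * (x:ℂ))) := by
  fun_prop

lemma cont_exp' (m : ℤ) : Continuous (fun x : ℝ => Complex.exp (Complex.I * (m:ℂ) * (x:ℂ))) := by
  fun_prop

lemma integrable_mul_exp {f : ℝ → ℂ} (hf : IntervalIntegrable f volume (-π) π) (m : ℤ) :
    IntervalIntegrable (fun x => f x * Complex.exp (-Complex.I * (m:ℂ) * (x:ℂ))) volume (-π) π :=
  hf.mul_continuousOn (cont_exp m).continuousOn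

lemma integral_eq_coef {f : ℝ → ℂ} (m : ℤ) :
    (∫ x in (-π)..π, f x * Complex.exp (-Complex.I * (m:ℂ) * (x:ℂ))) = 2 * π * fCoef f m := by
  rw [fCoef]
  have : ((2:ℂ) * π) ≠ 0 := by simpa using two_pi_ne
  field_simp

lemma fCoef_trig (j m : ℤ) :
    fCoef (fun x => Complex.exp (Complex.I * (j:ℂ) * (x:ℂ))) m = if j = m then 1 else 0 := by
  rw [fCoef]
  have h : ∀ x : ℝ, Complex.exp (Complex.I * (j:ℂ) * (x:ℂ)) * Complex.exp (-Complex.I * (m:ℂ) * (x:ℂ))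
      = Complex.exp (Complex.I * ((j - m : ℤ):ℂ) * (x:ℂ)) := by
    intro x
    rw [← Complex.exp_add]
    congr 1
    push_cast
    ring
  rw [intervalIntegral.integral_congr (fun x _ => h x), orth]
  rcases eq_or_ne j m with rfl | hjm
  · rw [if_pos (sub_self j), if_pos rfl]
    have : ((2:ℂ) * π) ≠ 0 := by simpa using two_pi_ne
    field_simp
  · rw [if_neg (sub_ne_zero.2 hjm), if_neg hjm, mul_zero]

lemma pSum_cont (f : ℝ → ℂ) (n : ℕ) : Continuous (pSum f n) := by
  apply continuous_finset_sum
  intro k _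
  exact continuous_const.mul (cont_exp' k)

lemma fCoef_pSum (f : ℝ → ℂ) (n : ℕ) (m : ℤ) :
    fCoef (pSum f n) m
      = if m ∈ Finset.Icc (-(n:ℤ)) (n:ℤ) then fCoef f m else 0 := by
  rw [fCoef]
  have h : ∀ x : ℝ, pSum f n x * Complex.exp (-Complex.I * (m:ℂ) * (x:ℂ))
      = ∑ k ∈ Finset.Icc (-(n:ℤ)) (n:ℤ),
          fCoef f k * (Complex.exp (Complex.I * (k:ℂ) * (x:ℂ)) * Complex.exp (-Complex.I * (m:ℂ) * (x:ℂ))) := by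
    intro x
    rw [pSum, Finset.sum_mul]
    exact Finset.sum_congr rfl fun k _ => by ring
  rw [intervalIntegral.integral_congr (fun x _ => h x)]
  rw [intervalIntegral.integral_finset_sum]
  swap
  · intro k _
    apply Continuous.intervalIntegrable
    exact continuous_const.mul ((cont_exp' k).mul (cont_exp m))
  have h2 : ∀ k ∈ Finset.Icc (-(n:ℤ)) (n:ℤ),
      (∫ x in (-π)..π, fCoef f k * (Complex.exp (Complex.I * (k:ℂ) * (x:ℂ)) * Complex.exp (-Complex.I * (m:ℂ) * (x:ℂ))))
        = fCoef f k * (2 * π * (if k = m then 1 else 0)) := by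
    intro k _
    rw [intervalIntegral.integral_const_mul]
    congr 1
    have := integral_eq_coef (f := fun x => Complex.exp (Complex.I * (k:ℂ) * (x:ℂ))) m
    rw [this, fCoef_trig]
  rw [Finset.sum_congr rfl h2]
  have h3 : ∑ k ∈ Finset.Icc (-(n:ℤ)) (n:ℤ), fCoef f k * (2 * π * (if k = m then 1 else 0))
      = if m ∈ Finset.Icc (-(n:ℤ)) (n:ℤ) then 2 * π * fCoef f m else 0 := by
    rw [Finset.sum_congr rfl (fun k _ => by
      rw [mul_ite, mul_ite, mul_one, mul_zero, mul_zero])]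
    rw [Finset.sum_ite_eq' (Finset.Icc (-(n:ℤ)) (n:ℤ)) m (fun k => fCoef f k * (2 * π))]
    split_ifs
    · ring
    · rfl
  rw [h3]
  have h2π : ((2:ℂ) * π) ≠ 0 := by simpa using two_pi_ne
  split_ifs
  · field_simp
  · rw [mul_zero]

lemma fCoef_sub {f : ℝ → ℂ} (hf : IntervalIntegrable f volume (-π) π) (n : ℕ) (m : ℤ) :
    fCoef (fun x => f x - pSum f n x) m = fCoef f m - fCoef (pSum f n) m := by
  rw [fCoef, fCoef, fCoef]
  have h : ∀ x : ℝ, (f x - pSum f n x) * Complex.exp (-Complex.I * (m:ℂ) * (x:ℂ))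
      = f x * Complex.exp (-Complex.I * (m:ℂ) * (x:ℂ))
        - pSum f n x * Complex.exp (-Complex.I * (m:ℂ) * (x:ℂ)) := fun x => by ring
  rw [intervalIntegral.integral_congr (fun x _ => h x),
    intervalIntegral.integral_sub (integrable_mul_exp hf m)
      (integrable_mul_exp ((pSum_cont f n).intervalIntegrable _ _) m)]
  ring

lemma sin_mul_exp (n k : ℕ) (x : ℝ) :
    ((Real.sin (k * x) : ℝ) : ℂ) * Complex.exp (-Complex.I * (n:ℂ) * (x:ℂ))
      = (Complex.I/2) * Complex.exp (-Complex.I * (((n:ℤ) + k : ℤ):ℂ) * (x:ℂ))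
        - (Complex.I/2) * Complex.exp (-Complex.I * (((n:ℤ) - k : ℤ):ℂ) * (x:ℂ)) := by
  have e1 : Complex.exp (-(((k:ℝ) * x : ℝ):ℂ) * Complex.I) * Complex.exp (-Complex.I * (n:ℂ) * (x:ℂ))
      = Complex.exp (-Complex.I * (((n:ℤ) + k : ℤ):ℂ) * (x:ℂ)) := by
    rw [← Complex.exp_add]; congr 1; push_cast; ring
  have e2 : Complex.exp ((((k:ℝ) * x : ℝ):ℂ) * Complex.I) * Complex.exp (-Complex.I * (n:ℂ) * (x:ℂ))
      = Complex.exp (-Complex.I * (((n:ℤ) - k : ℤ):ℂ) * (x:ℂ)) := by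
    rw [← Complex.exp_add]; congr 1; push_cast; ring
  calc ((Real.sin ((k:ℝ) * x) : ℝ) : ℂ) * Complex.exp (-Complex.I * (n:ℂ) * (x:ℂ))
      = (Complex.I/2) * (Complex.exp (-(((k:ℝ) * x : ℝ):ℂ) * Complex.I) * Complex.exp (-Complex.I * (n:ℂ) * (x:ℂ)))
        - (Complex.I/2) * (Complex.exp ((((k:ℝ) * x : ℝ):ℂ) * Complex.I) * Complex.exp (-Complex.I * (n:ℂ) * (x:ℂ))) := by
        rw [Complex.ofReal_sin, Complex.sin]; push_cast; ring
    _ = _ := by rw [e1, e2]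

lemma key_identity {f : ℝ → ℂ} (hf : IntervalIntegrable f volume (-π) π) {n : ℕ} (hn : 1 ≤ n) :
    (∫ x in (-π)..π, (f x - pSum f n x) *
        ((∑ k ∈ Icc 1 n, ((Real.sin (k * x) : ℝ) : ℂ) / k) * Complex.exp (-Complex.I * (n:ℂ) * (x:ℂ))))
      = π * Complex.I * ∑ k ∈ Icc 1 n, fCoef f ((n:ℤ) + k) / k := by
  set g : ℝ → ℂ := fun x => f x - pSum f n x with hgdef
  have hg : IntervalIntegrable g volume (-π) π :=
    hf.sub ((pSum_cont f n).intervalIntegrable _ _)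
  have hptw : ∀ x : ℝ, g x * ((∑ k ∈ Icc 1 n, ((Real.sin (k * x) : ℝ) : ℂ) / k) * Complex.exp (-Complex.I * (n:ℂ) * (x:ℂ)))
      = ∑ k ∈ Icc 1 n, ((k:ℂ))⁻¹ * (g x * (((Real.sin (k * x) : ℝ) : ℂ) * Complex.exp (-Complex.I * (n:ℂ) * (x:ℂ)))) := by
    intro x
    rw [Finset.sum_mul, Finset.mul_sum]
    exact Finset.sum_congr rfl fun k _ => by ring
  rw [intervalIntegral.integral_congr (fun x _ => hptw x)]
  rw [intervalIntegral.integral_finset_sum]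
  swap
  · intro k _
    apply IntervalIntegrable.const_mul
    exact hg.mul_continuousOn (Continuous.continuousOn (by fun_prop))
  have hterm : ∀ k ∈ Icc 1 n,
      (∫ x in (-π)..π, ((k:ℂ))⁻¹ * (g x * (((Real.sin (k * x) : ℝ) : ℂ) * Complex.exp (-Complex.I * (n:ℂ) * (x:ℂ)))))
        = ((k:ℂ))⁻¹ * (π * Complex.I * fCoef f ((n:ℤ) + k)) := by
    intro k hk
    have hk1 : 1 ≤ k := (Finset.mem_Icc.1 hk).1
    have hkn : k ≤ n := (Finset.mem_Icc.1 hk).2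
    rw [intervalIntegral.integral_const_mul]
    congr 1
    have hptw2 : ∀ x : ℝ, g x * (((Real.sin (k * x) : ℝ) : ℂ) * Complex.exp (-Complex.I * (n:ℂ) * (x:ℂ)))
        = (Complex.I/2) * (g x * Complex.exp (-Complex.I * (((n:ℤ) + k : ℤ):ℂ) * (x:ℂ)))
          - (Complex.I/2) * (g x * Complex.exp (-Complex.I * (((n:ℤ) - k : ℤ):ℂ) * (x:ℂ))) := by
      intro x
      rw [show (((Real.sin (k * x) : ℝ) : ℂ) * Complex.exp (-Complex.I * (n:ℂ) * (x:ℂ))) =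
        ((Complex.I/2) * Complex.exp (-Complex.I * (((n:ℤ) + k : ℤ):ℂ) * (x:ℂ))
          - (Complex.I/2) * Complex.exp (-Complex.I * (((n:ℤ) - k : ℤ):ℂ) * (x:ℂ))) from sin_mul_exp n k x]
      ring
    rw [intervalIntegral.integral_congr (fun x _ => hptw2 x)]
    rw [intervalIntegral.integral_sub
      ((integrable_mul_exp hg ((n:ℤ)+k)).const_mul _)
      ((integrable_mul_exp hg ((n:ℤ)-k)).const_mul _),
      intervalIntegral.integral_const_mul, intervalIntegral.integral_const_mul,
      integral_eq_coef, integral_eq_coef]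
    have hc1 : fCoef g ((n:ℤ) + k) = fCoef f ((n:ℤ) + k) := by
      rw [hgdef, fCoef_sub hf, fCoef_pSum, if_neg, sub_zero]
      rw [Finset.mem_Icc]
      push_cast
      omega
    have hc2 : fCoef g ((n:ℤ) - k) = 0 := by
      rw [hgdef, fCoef_sub hf, fCoef_pSum, if_pos, sub_self]
      rw [Finset.mem_Icc]
      push_cast
      omega
    rw [hc1, hc2, mul_zero, mul_zero, sub_zero]
    ring
  rw [Finset.sum_congr rfl hterm, Finset.mul_sum]
  exact Finset.sum_congr rfl fun k _ => by rw [div_eq_inv_mul]; ring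


lemma sector_re {z : ℂ} {θ : ℝ} (hθ2 : θ < π/2) (h : |z.arg| ≤ θ) :
    ‖z‖ * Real.cos θ ≤ z.re := by
  have hre : z.re = ‖z‖ * Real.cos z.arg := (Complex.norm_mul_cos_arg z).symm
  have hcos : Real.cos θ ≤ Real.cos z.arg := by
    rw [← Real.cos_abs z.arg]
    apply Real.cos_le_cos_of_nonneg_of_le_pi (abs_nonneg _) _ h
    linarith [Real.pi_pos]
  rw [hre]
  have := norm_nonneg z
  nlinarith

theorem stmt2 (θ₀ : ℝ) (hθ0 : 0 ≤ θ₀) (hθ1 : θ₀ < π / 2) :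
    ∃ C : ℝ, 0 < C ∧ ∀ f : ℝ → ℂ, Function.Periodic f (2 * π) →
      IntervalIntegrable f MeasureTheory.volume (-π) π →
      (∀ n : ℕ, |(fCoef f n).arg| ≤ θ₀) →
      ∀ n : ℕ, 1 ≤ n →
        ∑ k ∈ Finset.Icc 1 n, ‖fCoef f ((n : ℤ) + k)‖ / k ≤
          C * L1 (fun x => f x - pSum f n x) := by
  have hπ := Real.pi_pos
  have hcos : 0 < Real.cos θ₀ :=
    Real.cos_pos_of_mem_Ioo ⟨by linarith, hθ1⟩
  refine ⟨(π + 2) / (π * Real.cos θ₀), by positivity, ?_⟩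
  intro f _ hf harg n hn
  set g : ℝ → ℂ := fun x => f x - pSum f n x with hgdef
  have hg : IntervalIntegrable g MeasureTheory.volume (-π) π :=
    hf.sub ((pSum_cont f n).intervalIntegrable _ _)
  set T : ℂ := ∑ k ∈ Icc 1 n, fCoef f ((n:ℤ) + k) / k with hT
  -- bound |T| by ((π+2)/π) * L1 g
  have hL1 : L1 g = ∫ x in (-π)..π, ‖g x‖ := by
    rw [L1]
  have hL1nonneg : 0 ≤ L1 g := by
    rw [hL1, intervalIntegral.integral_of_le (by linarith)]
    positivity
  have habsT : ‖T‖ ≤ (π + 2) / π * L1 g := by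
    have hkey := key_identity hf hn
    have habs : ‖(π:ℂ) * Complex.I * T‖ = π * ‖T‖ := by
      rw [norm_mul, norm_mul, Complex.norm_I, Complex.norm_of_nonneg hπ.le, mul_one]
    have hbint : ‖∫ x in (-π)..π, g x *
        ((∑ k ∈ Icc 1 n, ((Real.sin (k * x) : ℝ) : ℂ) / k) * Complex.exp (-Complex.I * (n:ℂ) * (x:ℂ)))‖
        ≤ (π + 2) * L1 g := by
      calc ‖∫ x in (-π)..π, g x * ((∑ k ∈ Icc 1 n, ((Real.sin (k * x) : ℝ) : ℂ) / k) * Complex.exp (-Complex.I * (n:ℂ) * (x:ℂ)))‖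
          ≤ ∫ x in (-π)..π, ‖g x * ((∑ k ∈ Icc 1 n, ((Real.sin (k * x) : ℝ) : ℂ) / k) * Complex.exp (-Complex.I * (n:ℂ) * (x:ℂ)))‖ :=
            intervalIntegral.norm_integral_le_integral_norm (by linarith)
        _ ≤ ∫ x in (-π)..π, (π + 2) * ‖g x‖ := by
            apply intervalIntegral.integral_mono_on (by linarith)
            · exact (hg.mul_continuousOn (Continuous.continuousOn (by fun_prop))).norm
            · exact hg.norm.const_mul _
            · intro x _
              rw [norm_mul, norm_mul]
              have h1 : ‖Complex.exp (-Complex.I * (n:ℂ) * (x:ℂ))‖ = 1 := by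
                rw [Complex.norm_exp]
                simp
              have h2 : ‖(∑ k ∈ Icc 1 n, ((Real.sin (k * x) : ℝ) : ℂ) / k)‖ ≤ π + 2 := by
                have hcast : (∑ k ∈ Icc 1 n, ((Real.sin (k * x) : ℝ) : ℂ) / k)
                    = (((∑ k ∈ Icc 1 n, Real.sin (k * x) / k : ℝ)) : ℂ) := by
                  push_cast
                  rfl
                rw [hcast, Complex.norm_real]
                exact sineSum_bound n x
              calc ‖g x‖ * (‖(∑ k ∈ Icc 1 n, ((Real.sin (k * x) : ℝ) : ℂ) / k)‖ * ‖Complex.exp (-Complex.I * (n:ℂ) * (x:ℂ))‖)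
                  ≤ ‖g x‖ * ((π + 2) * 1) := by
                    apply mul_le_mul_of_nonneg_left _ (norm_nonneg _)
                    rw [h1]
                    exact mul_le_mul_of_nonneg_right h2 zero_le_one
                _ = (π + 2) * ‖g x‖ := by ring
        _ = (π + 2) * L1 g := by
            rw [hL1, ← intervalIntegral.integral_const_mul]
    have : π * ‖T‖ ≤ (π + 2) * L1 g := by
      rw [← habs, hT, ← hkey]
      exact hbint
    rw [div_mul_eq_mul_div, le_div_iff₀ hπ]
    linarith
  -- sector step
  have hstep : ∑ k ∈ Icc 1 n, ‖fCoef f ((n : ℤ) + k)‖ / k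
      ≤ (1 / Real.cos θ₀) * T.re := by
    have hre : T.re = ∑ k ∈ Icc 1 n, (fCoef f ((n:ℤ) + k)).re / k := by
      rw [hT, Complex.re_sum]
      refine Finset.sum_congr rfl fun k _ => ?_
      rw [show ((k:ℕ):ℂ) = ((k:ℝ):ℂ) from by push_cast; rfl, Complex.div_ofReal_re]
    rw [hre, Finset.mul_sum]
    refine Finset.sum_le_sum fun k hk => ?_
    have hk1 : 1 ≤ k := (Finset.mem_Icc.1 hk).1
    have hkpos : (0:ℝ) < k := by exact_mod_cast hk1
    have hargk : |(fCoef f ((n:ℤ) + k)).arg| ≤ θ₀ := by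
      have := harg (n + k)
      rwa [Nat.cast_add] at this
    have hsec := sector_re hθ1 hargk
    have hz2 : ‖fCoef f ((n:ℤ) + k)‖ ≤ 1 / Real.cos θ₀ * (fCoef f ((n:ℤ) + k)).re := by
      rw [one_div, inv_mul_eq_div, le_div_iff₀ hcos]
      exact hsec
    calc ‖fCoef f ((n:ℤ) + k)‖ / k
        ≤ (1 / Real.cos θ₀ * (fCoef f ((n:ℤ) + k)).re) / k := by gcongr
      _ = 1 / Real.cos θ₀ * ((fCoef f ((n:ℤ) + k)).re / k) := by ring
  -- combine
  have hTre : T.re ≤ ‖T‖ := Complex.re_le_norm T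
  calc ∑ k ∈ Icc 1 n, ‖fCoef f ((n : ℤ) + k)‖ / k
      ≤ (1 / Real.cos θ₀) * T.re := hstep
    _ ≤ (1 / Real.cos θ₀) * ‖T‖ := by
        apply mul_le_mul_of_nonneg_left hTre (by positivity)
    _ ≤ (1 / Real.cos θ₀) * ((π + 2) / π * L1 g) := by
        apply mul_le_mul_of_nonneg_left habsT (by positivity)
    _ = ((π + 2) / π / Real.cos θ₀) * L1 g := by ring
    _ = (π + 2) / (π * Real.cos θ₀) * L1 g := by rw [div_div]

end StmtAux
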